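/- Let G be a tree grammar with finitely many nonterminals and finitely many rules, and cost function with cost(r) > 0 for every rule r. Define the Bellman operator T : (Γ → ℝ≥0∞) → (Γ → ℝ≥0∞) by T(c)(X) = the infimum, over all rules r with lhs(r) = X and args(r) = [X₁,…,X_k], of cost(r) + Σᵢ c(Xᵢ) (with T(c)(X) = ⊤ if no rule has left-hand nonterminal X). Then the |Γ|-fold iterate of T applied to the constant-⊤ function computes the minimal costs: for every nonterminal X, T^{|Γ|}(⊤)(X) = ⨅ {cost(p) : p a program generated from X} (where the infimum of the empty set is ⊤). -/

import Mathlib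

/-- Finitely-branching trees with nodes labeled by elements of `R` (derivation trees). -/
inductive Tree' (R : Type) : Type
  | node : R → List (Tree' R) → Tree' R

/-- The label of the root node. -/
def Tree'.rootLabel {R : Type} : Tree' R → R
  | .node r _ => r

/-- A tree grammar: nonterminals `Γ`, derivation rules `R`, each rule having a
left-hand nonterminal and a list of argument nonterminals. -/
structure TreeGrammar where
  Γ : Type
  R : Type
  lhs : R → Γ
  args : R → List Γ

/-- Well-formed derivation trees (programs) of a tree grammar. -/
inductive TreeGrammar.WF (G : TreeGrammar) : Tree' G.R → Prop
  | node (r : G.R) (ts : List (Tree' G.R))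
      (hlen : ts.length = (G.args r).length)
      (hwf : ∀ t ∈ ts, G.WF t)
      (hlhs : ∀ i : ℕ, (h : i < ts.length) →
        G.lhs (ts[i].rootLabel) = (G.args r)[i]'(hlen ▸ h)) :
      G.WF (Tree'.node r ts)

/-- `p` is a program generated from the nonterminal `X`. -/
def TreeGrammar.GenFrom (G : TreeGrammar) (X : G.Γ) (p : Tree' G.R) : Prop :=
  G.WF p ∧ G.lhs p.rootLabel = X

/-- The cost of a program, extending a cost function on rules. -/
def costP {R : Type} (cost : R → ℝ) : Tree' R → ℝ
  | .node r ts => cost r + (ts.attach.map (fun t => costP cost t.1)).sum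
decreasing_by
  have := List.sizeOf_lt_of_mem t.2
  simp only [Tree'.node.sizeOf_spec]
  omega

/-- The number of nodes of a derivation tree. -/
def sizeP {R : Type} : Tree' R → ℕ
  | .node _ ts => 1 + (ts.attach.map (fun t => sizeP t.1)).sum
decreasing_by
  have := List.sizeOf_lt_of_mem t.2
  simp only [Tree'.node.sizeOf_spec]
  omega

/-- The depth of a derivation tree: number of nodes on a longest root-to-leaf path. -/
def depthP {R : Type} : Tree' R → ℕ
  | .node _ ts => 1 + (ts.attach.map (fun t => depthP t.1)).foldr max 0
decreasing_by
  have := List.sizeOf_lt_of_mem t.2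
  simp only [Tree'.node.sizeOf_spec]
  omega

/-- `p'` is a successor of `p` with respect to the nonterminal `X`:
`p'` is generated from `X`, has strictly larger cost than `p`, and no program
generated from `X` has cost strictly between the two. -/
def IsSucc (G : TreeGrammar) (cost : G.R → ℝ) (X : G.Γ) (p p' : Tree' G.R) : Prop :=
  G.GenFrom X p' ∧ costP cost p < costP cost p' ∧
    ∀ p'', G.GenFrom X p'' →
      ¬(costP cost p < costP cost p'' ∧ costP cost p'' < costP cost p')

/-- `X` occurs as the left-hand nonterminal of the rule labeling some node of the tree. -/
inductive OccursLhs (G : TreeGrammar) (X : G.Γ) : Tree' G.R → Prop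
  | here (r : G.R) (ts : List (Tree' G.R)) : G.lhs r = X → OccursLhs G X (.node r ts)
  | there (r : G.R) (ts : List (Tree' G.R)) (t : Tree' G.R) :
      t ∈ ts → OccursLhs G X t → OccursLhs G X (.node r ts)

/-- Condition (*): along every root-to-leaf path, no nonterminal occurs twice as the
left-hand nonterminal of the rules labeling the nodes on the path. -/
inductive StarCond (G : TreeGrammar) : Tree' G.R → Prop
  | node (r : G.R) (ts : List (Tree' G.R))
      (hsub : ∀ t ∈ ts, StarCond G t)
      (hnew : ∀ t ∈ ts, ¬ OccursLhs G (G.lhs r) t) :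
      StarCond G (.node r ts)

/-- `IsSubtree s t`: `s` is the subtree of `t` rooted at some node of `t`. -/
inductive IsSubtree {R : Type} : Tree' R → Tree' R → Prop
  | refl (t : Tree' R) : IsSubtree t t
  | child (s : Tree' R) (r : R) (ts : List (Tree' R)) (t : Tree' R) :
      t ∈ ts → IsSubtree s t → IsSubtree s (.node r ts)

/-- `IsStrictSubtree s t`: `s` is the subtree of `t` rooted at a strict descendant
of the root of `t`. -/
inductive IsStrictSubtree {R : Type} : Tree' R → Tree' R → Prop
  | child (s : Tree' R) (r : R) (ts : List (Tree' R)) (t : Tree' R) :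
      t ∈ ts → IsSubtree s t → IsStrictSubtree s (.node r ts)

/-- The subtree of a tree at a given position (a list of child indices), if it exists. -/
def subtreeAt {R : Type} : Tree' R → List ℕ → Option (Tree' R)
  | t, [] => some t
  | .node _ ts, i :: is =>
      match ts[i]? with
      | some t => subtreeAt t is
      | none => none

/-- Replacing the subtree at a given position by `q`. -/
def replaceAt {R : Type} : Tree' R → List ℕ → Tree' R → Tree' R
  | _, [], q => q
  | .node r ts, i :: is, q =>
      match ts[i]? with
      | some t => .node r (ts.set i (replaceAt t is q))
      | none => .node r ts

open scoped ENNReal in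
/-- The Bellman operator associated with a tree grammar and a cost function. -/
noncomputable def bellman (G : TreeGrammar) (cost : G.R → ℝ) (c : G.Γ → ℝ≥0∞) : G.Γ → ℝ≥0∞ :=
  fun X => ⨅ r ∈ {r : G.R | G.lhs r = X},
    (ENNReal.ofReal (cost r) + ((G.args r).map c).sum)
open scoped ENNReal

namespace Aux

theorem tree_ind {R : Type} {P : Tree' R → Prop}
    (h : ∀ r ts, (∀ t ∈ ts, P t) → P (.node r ts)) : ∀ t, P t
  | .node r ts => h r ts (fun t ht => tree_ind h t)
decreasing_by
  have := List.sizeOf_lt_of_mem ht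
  simp only [Tree'.node.sizeOf_spec]
  omega

theorem costP_node {R : Type} (cost : R → ℝ) (r : R) (ts : List (Tree' R)) :
    costP cost (.node r ts) = cost r + (ts.map (costP cost)).sum := by
  rw [costP]
  congr 1
  rw [List.attach_map_val]

theorem depthP_node {R : Type} (r : R) (ts : List (Tree' R)) :
    depthP (.node r ts) = 1 + (ts.map depthP).foldr max 0 := by
  rw [depthP]
  congr 1
  rw [List.attach_map_val]

theorem le_foldr_max {l : List ℕ} {x : ℕ} (hx : x ∈ l) : x ≤ l.foldr max 0 := by
  induction l with
  | nil => cases hx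
  | cons a l ih =>
    rcases List.mem_cons.1 hx with rfl | h
    · exact le_max_left _ _
    · exact le_trans (ih h) (le_max_right _ _)

theorem foldr_max_le {l : List ℕ} {k : ℕ} (h : ∀ x ∈ l, x ≤ k) : l.foldr max 0 ≤ k := by
  induction l with
  | nil => exact Nat.zero_le k
  | cons a l ih => exact max_le (h a (.head _)) (ih fun x hx => h x (.tail _ hx))

theorem costP_nonneg {R : Type} {cost : R → ℝ} (hpos : ∀ r, 0 < cost r) (t : Tree' R) :
    0 ≤ costP cost t := by
  induction t using tree_ind with
  | h r ts ih =>
    rw [costP_node]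
    have : 0 ≤ (ts.map (costP cost)).sum := by
      apply List.sum_nonneg
      intro x hx
      obtain ⟨t, ht, rfl⟩ := List.mem_map.1 hx
      exact ih t ht
    linarith [hpos r]

end Aux
namespace Aux

theorem sum_le_sum_get {α : Type} [AddCommMonoid α] [PartialOrder α] [IsOrderedAddMonoid α] :
    ∀ {l₁ l₂ : List α}, l₁.length = l₂.length →
    (∀ i (h₁ : i < l₁.length) (h₂ : i < l₂.length), l₁[i] ≤ l₂[i]) → l₁.sum ≤ l₂.sum
  | [], [], _, _ => le_refl _
  | a :: l₁, b :: l₂, hlen, h => by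
    simp only [List.sum_cons]
    have h0 := h 0 (by simp) (by simp)
    simp only [List.getElem_cons_zero] at h0
    have := sum_le_sum_get (l₁ := l₁) (l₂ := l₂) (by simpa using hlen)
      (fun i h₁ h₂ => by exact h (i+1) (by simpa using h₁) (by simpa using h₂))
    exact add_le_add h0 this

theorem mem_cost_le {R : Type} {cost : R → ℝ} (hpos : ∀ r, 0 < cost r)
    {r : R} {ts : List (Tree' R)} {t : Tree' R} (ht : t ∈ ts) :
    costP cost t ≤ costP cost (.node r ts) := by
  rw [costP_node]
  have h1 : costP cost t ≤ (ts.map (costP cost)).sum := by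
    exact List.single_le_sum (fun x hx => by
      obtain ⟨u, hu, rfl⟩ := List.mem_map.1 hx
      exact costP_nonneg hpos u) _ (List.mem_map_of_mem ht)
  linarith [hpos r]

theorem subtree_cost_le {R : Type} {cost : R → ℝ} (hpos : ∀ r, 0 < cost r)
    {s t : Tree' R} (h : IsSubtree s t) : costP cost s ≤ costP cost t := by
  induction h with
  | refl => exact le_refl _
  | child r ts t ht _ ih => exact le_trans ih (mem_cost_le hpos ht)

theorem subtree_wf {G : TreeGrammar} {s t : Tree' G.R} (h : IsSubtree s t) (hwf : G.WF t) :
    G.WF s := by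
  induction h with
  | refl => exact hwf
  | child r ts t ht _ ih =>
    cases hwf with
    | node _ _ hlen hwf' hlhs => exact ih (hwf' t ht)

theorem subtree_star {G : TreeGrammar} {s t : Tree' G.R} (h : IsSubtree s t)
    (hs : StarCond G t) : StarCond G s := by
  induction h with
  | child r ts t ht _ ih =>
    cases hs with
    | node _ _ hsub hnew => exact ih (hsub t ht)
  | refl => exact hs

theorem occurs_subtree {G : TreeGrammar} {X : G.Γ} {t : Tree' G.R} (h : OccursLhs G X t) :
    ∃ s, IsSubtree s t ∧ G.lhs s.rootLabel = X := by
  induction h with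
  | here r ts hr => exact ⟨.node r ts, .refl _, hr⟩
  | there r ts t ht _ ih =>
    obtain ⟨s, hs, hl⟩ := ih
    exact ⟨s, .child s r ts t ht hs, hl⟩

/-- Pruning: every WF tree has a StarCond WF tree with the same root lhs and no larger cost. -/
theorem prune {G : TreeGrammar} {cost : G.R → ℝ} (hpos : ∀ r, 0 < cost r) :
    ∀ p : Tree' G.R, G.WF p → ∃ q : Tree' G.R, G.WF q ∧ StarCond G q ∧
      G.lhs q.rootLabel = G.lhs p.rootLabel ∧ costP cost q ≤ costP cost p := by
  intro p
  induction p using tree_ind with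
  | h r ts ih =>
    intro hwf
    cases hwf with
    | node _ _ hlen hwf hlhs =>
    have hqs : ∃ qs : List (Tree' G.R), qs.length = ts.length ∧
        (∀ i (h : i < qs.length) (h' : i < ts.length), G.WF (qs[i]) ∧ StarCond G (qs[i]) ∧
          G.lhs (qs[i].rootLabel) = G.lhs (ts[i].rootLabel) ∧
          costP cost (qs[i]) ≤ costP cost (ts[i])) := by
      clear hlen hlhs
      induction ts with
      | nil => exact ⟨[], rfl, fun i h => absurd h (by simp)⟩
      | cons a l ihl =>
        obtain ⟨qs, hql, hq⟩ := ihl (fun t ht => ih t (.tail _ ht)) (fun t ht => hwf t (.tail _ ht))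
        obtain ⟨qa, h1, h2, h3, h4⟩ := ih a (.head _) (hwf a (.head _))
        refine ⟨qa :: qs, by simp [hql], fun i h h' => ?_⟩
        cases i with
        | zero => exact ⟨h1, h2, h3, h4⟩
        | succ i => simpa using hq i (by simpa using h) (by simpa using h')
    obtain ⟨qs, hql, hq⟩ := hqs
    have hwfq : G.WF (.node r qs) := by
      refine .node r qs (by omega) (fun t ht => ?_) (fun i h => ?_)
      · obtain ⟨i, h, rfl⟩ := List.getElem_of_mem ht
        exact (hq i h (by omega)).1
      · rw [(hq i h (by omega)).2.2.1]
        exact hlhs i (by omega)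
    have hcostq : costP cost (.node r qs) ≤ costP cost (.node r ts) := by
      rw [costP_node, costP_node]
      have : ((qs.map (costP cost))).sum ≤ ((ts.map (costP cost))).sum := by
        refine sum_le_sum_get (by simpa using hql) (fun i h1 h2 => ?_)
        simp only [List.getElem_map]
        exact (hq i (by simpa using h1) (by simpa using h2)).2.2.2
      linarith
    by_cases hocc : ∀ t ∈ qs, ¬ OccursLhs G (G.lhs r) t
    · refine ⟨.node r qs, hwfq, ?_, rfl, hcostq⟩
      refine .node r qs (fun t ht => ?_) hocc
      obtain ⟨i, h, rfl⟩ := List.getElem_of_mem ht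
      exact (hq i h (by omega)).2.1
    · push_neg at hocc
      obtain ⟨t, ht, hocc⟩ := hocc
      obtain ⟨s, hsub, hl⟩ := occurs_subtree hocc
      obtain ⟨i, h, rfl⟩ := List.getElem_of_mem ht
      refine ⟨s, subtree_wf hsub (hq i h (by omega)).1, subtree_star hsub (hq i h (by omega)).2.1, hl, ?_⟩
      calc costP cost s ≤ costP cost (qs[i]) := subtree_cost_le hpos hsub
        _ ≤ costP cost (ts[i]'(by omega)) := (hq i h (by omega)).2.2.2
        _ ≤ costP cost (.node r ts) := mem_cost_le hpos (List.getElem_mem _)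

end Aux
namespace Aux

theorem star_depth {G : TreeGrammar} :
    ∀ q : Tree' G.R, StarCond G q → ∀ S : Finset G.Γ,
      (∀ Y, OccursLhs G Y q → Y ∈ S) → depthP q ≤ S.card := by
  intro q
  induction q using tree_ind with
  | h r ts ih =>
    intro hstar S hS
    classical
    cases hstar with
    | node _ _ hsub hnew =>
    have hrS : G.lhs r ∈ S := hS _ (.here r ts rfl)
    have hcard : 1 ≤ S.card := Finset.card_pos.2 ⟨_, hrS⟩
    rw [depthP_node]
    have : (ts.map depthP).foldr max 0 ≤ S.card - 1 := by
      refine foldr_max_le (fun x hx => ?_)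
      obtain ⟨t, ht, rfl⟩ := List.mem_map.1 hx
      have := ih t ht (hsub t ht) (S.erase (G.lhs r)) (fun Y hY => by
        refine Finset.mem_erase.2 ⟨fun hYe => hnew t ht (by rwa [hYe] at hY), hS Y (.there r ts t ht hY)⟩)
      rwa [Finset.card_erase_of_mem hrS] at this
    omega

theorem depth_le_card {G : TreeGrammar} [Fintype G.Γ] {q : Tree' G.R}
    (hstar : StarCond G q) : depthP q ≤ Fintype.card G.Γ := by
  simpa [Finset.card_univ] using star_depth q hstar Finset.univ (fun Y _ => Finset.mem_univ Y)

end Aux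
open scoped ENNReal
namespace Aux

theorem ofReal_list_sum : ∀ (l : List ℝ), (∀ x ∈ l, 0 ≤ x) →
    ENNReal.ofReal l.sum = (l.map ENNReal.ofReal).sum
  | [], _ => by simp
  | a :: l, h => by
    simp only [List.sum_cons, List.map_cons]
    rw [ENNReal.ofReal_add (h a (.head _)) (List.sum_nonneg (fun x hx => h x (.tail _ hx))),
      ofReal_list_sum l (fun x hx => h x (.tail _ hx))]

theorem depthP_pos {R : Type} (t : Tree' R) : 1 ≤ depthP t := by
  cases t with
  | node r ts => rw [depthP_node]; omega

theorem child_depth_le {R : Type} {r : R} {ts : List (Tree' R)} {t : Tree' R} {k : ℕ}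
    (ht : t ∈ ts) (h : depthP (.node r ts) ≤ k + 1) : depthP t ≤ k := by
  rw [depthP_node] at h
  have := le_foldr_max (List.mem_map_of_mem (f := depthP) ht)
  omega

theorem ofReal_costP_node {R : Type} {cost : R → ℝ} (hpos : ∀ r, 0 < cost r)
    (r : R) (ts : List (Tree' R)) :
    ENNReal.ofReal (costP cost (.node r ts)) =
      ENNReal.ofReal (cost r) + (ts.map (fun t => ENNReal.ofReal (costP cost t))).sum := by
  rw [costP_node, ENNReal.ofReal_add (hpos r).le
      (List.sum_nonneg (fun x hx => by
        obtain ⟨u, hu, rfl⟩ := List.mem_map.1 hx; exact costP_nonneg hpos u)),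
    ofReal_list_sum _ (fun x hx => by
        obtain ⟨u, hu, rfl⟩ := List.mem_map.1 hx; exact costP_nonneg hpos u),
    List.map_map]
  rfl

theorem iter_le {G : TreeGrammar} {cost : G.R → ℝ} (hpos : ∀ r, 0 < cost r) :
    ∀ (p : Tree' G.R) (k : ℕ) (X : G.Γ), G.GenFrom X p → depthP p ≤ k →
      (bellman G cost)^[k] (fun _ => (⊤ : ℝ≥0∞)) X ≤ ENNReal.ofReal (costP cost p) := by
  intro p
  induction p using tree_ind with
  | h r ts ih =>
    intro k X hgen hd
    obtain ⟨hwf, hX⟩ := hgen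
    cases hwf with
    | node _ _ hlen hwf hlhs =>
    match k with
    | 0 => exact absurd (le_trans (depthP_pos _) hd) (by omega)
    | k + 1 =>
      rw [Function.iterate_succ_apply']
      have hrX : r ∈ {r : G.R | G.lhs r = X} := hX
      refine le_trans (iInf₂_le r hrX) ?_
      rw [ofReal_costP_node hpos]
      refine add_le_add_right ?_ _
      refine sum_le_sum_get (by simp [hlen]) (fun i h1 h2 => ?_)
      simp only [List.getElem_map]
      have hi : i < ts.length := by simpa using h2
      refine ih (ts[i]) (List.getElem_mem _) k (G.lhs ((ts[i]).rootLabel))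
        ⟨hwf _ (List.getElem_mem _), rfl⟩ (child_depth_le (List.getElem_mem _) hd)
        |>.trans_eq' ?_
      exact congrArg _ (hlhs i hi)

end Aux
namespace Aux

/-- Depth-bounded minimal cost. -/
noncomputable def mc (G : TreeGrammar) (cost : G.R → ℝ) (k : ℕ) (X : G.Γ) : ℝ≥0∞ :=
  ⨅ p ∈ {p : Tree' G.R | G.GenFrom X p ∧ depthP p ≤ k}, ENNReal.ofReal (costP cost p)

theorem sum_mc (G : TreeGrammar) (cost : G.R → ℝ) (k : ℕ) :
    ∀ L : List G.Γ,
      (L.map (mc G cost k)).sum =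
        ⨅ ps ∈ {ps : List (Tree' G.R) |
            List.Forall₂ (fun Y p => G.GenFrom Y p ∧ depthP p ≤ k) L ps},
          (ps.map (fun p => ENNReal.ofReal (costP cost p))).sum := by
  intro L
  induction L with
  | nil =>
    refine le_antisymm ?_ ?_
    · simp only [List.map_nil, List.sum_nil]; exact zero_le
    · exact iInf₂_le_of_le [] List.Forall₂.nil (by simp)
  | cons Y L ih =>
    simp only [List.map_cons, List.sum_cons, ih]
    refine le_antisymm ?_ ?_
    · refine le_iInf₂ fun qs hqs => ?_
      rcases List.forall₂_cons_left_iff.1 hqs with ⟨p, ps, hp, hps, rfl⟩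
      simp only [List.map_cons, List.sum_cons]
      exact add_le_add (iInf₂_le p hp) (iInf₂_le ps hps)
    · simp_rw [mc, ENNReal.iInf_add, ENNReal.add_iInf]
      refine le_iInf fun p => le_iInf fun hp => le_iInf fun ps => le_iInf fun hps => ?_
      exact iInf₂_le_of_le (p :: ps) (List.Forall₂.cons hp hps) (by simp)

theorem mc_le_iter {G : TreeGrammar} {cost : G.R → ℝ} (hpos : ∀ r, 0 < cost r) :
    ∀ (k : ℕ) (X : G.Γ), mc G cost k X ≤ (bellman G cost)^[k] (fun _ => (⊤ : ℝ≥0∞)) X := by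
  intro k
  induction k with
  | zero => intro X; exact le_top
  | succ k ih =>
    intro X
    rw [Function.iterate_succ_apply']
    refine le_iInf₂ fun r hr => ?_
    have step : mc G cost (k+1) X ≤
        ENNReal.ofReal (cost r) + ((G.args r).map (mc G cost k)).sum := by
      rw [sum_mc]
      simp_rw [ENNReal.add_iInf]
      refine le_iInf fun ps => le_iInf fun hps => ?_
      have hlen : (G.args r).length = ps.length := hps.length_eq
      have hget := (List.forall₂_iff_get.1 hps).2
      have hgen : G.GenFrom X (.node r ps) := by
        refine ⟨.node r ps (hlen.symm) (fun t ht => ?_) (fun i h => ?_), hr⟩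
        · obtain ⟨i, hi, rfl⟩ := List.getElem_of_mem ht
          exact (hget i (by omega) hi).1.1
        · simpa using ((hget i (by omega) h).1.2)
      have hdep : depthP (.node r ps) ≤ k + 1 := by
        rw [depthP_node]
        have : (ps.map depthP).foldr max 0 ≤ k := by
          refine foldr_max_le fun x hx => ?_
          obtain ⟨t, ht, rfl⟩ := List.mem_map.1 hx
          obtain ⟨i, hi, rfl⟩ := List.getElem_of_mem ht
          exact (hget i (by omega) hi).2
        omega
      refine iInf₂_le_of_le (Tree'.node r ps) ⟨hgen, hdep⟩ ?_
      rw [ofReal_costP_node hpos]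
    refine step.trans (add_le_add_right ?_ _)
    refine sum_le_sum_get (by simp) fun i h1 h2 => ?_
    simp only [List.getElem_map]
    exact ih _

end Aux

open scoped ENNReal in
/-- the `|Γ|`-fold iterate of the Bellman operator applied to the
constant-`⊤` function computes the minimal costs. -/
theorem stmt8 (G : TreeGrammar) [Fintype G.Γ] [Fintype G.R] (cost : G.R → ℝ)
    (hpos : ∀ r, 0 < cost r) :
    ∀ X : G.Γ, (bellman G cost)^[Fintype.card G.Γ] (fun _ => (⊤ : ℝ≥0∞)) X =
      ⨅ p ∈ {p : Tree' G.R | G.GenFrom X p}, ENNReal.ofReal (costP cost p) := by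
  intro X
  refine le_antisymm ?_ ?_
  · refine le_iInf₂ fun p hp => ?_
    obtain ⟨q, hwfq, hstar, hlq, hcq⟩ := Aux.prune hpos p hp.1
    have := Aux.iter_le hpos q (Fintype.card G.Γ) X ⟨hwfq, hlq.trans hp.2⟩
      (Aux.depth_le_card hstar)
    exact this.trans (ENNReal.ofReal_le_ofReal hcq)
  · refine le_trans ?_ (Aux.mc_le_iter hpos (Fintype.card G.Γ) X)
    unfold Aux.mc
    exact le_iInf₂ fun p hp => iInf₂_le p hp.1
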